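/- For μ-almost every x, liminf_{n→∞} n^{1/α} d(T^n(x), x) ≤ g(x)^{1/α}, where g(x) = lim_{r→0} ess sup of (dH_α/dμ) restricted to B(x, r). -/

import Mathlib

open MeasureTheory Filter Set
open scoped ENNReal NNReal

theorem keyest {X : Type*} [MetricSpace X] [MeasurableSpace X] [BorelSpace X]
    (T : X → X) (μ : Measure X) [IsProbabilityMeasure μ]
    (hT : MeasurePreserving T μ μ)
    (α c : ℝ) (hα : 0 < α) (hc : 0 < c)
    (A : Set X) (hA : MeasurableSet A) (ε : ℝ≥0∞) (hε : 0 < ε)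
    (hAN : ∀ x ∈ A, ∀ n : ℕ, 1 ≤ n → T^[n] x ∈ A → edist (T^[n] x) x ≤ ε →
      ENNReal.ofReal c < ENNReal.ofReal ((n : ℝ) ^ (1 / α)) * edist (T^[n] x) x) :
    ENNReal.ofReal (c ^ α) • μ.restrict A ≤ μH[α] := by
  classical
  apply Measure.le_hausdorffMeasure _ _ ε hε
  intro s hs
  rw [Measure.smul_apply, smul_eq_mul, Measure.restrict_apply' hA]
  have hsub : s ∩ A ⊆ closure s ∩ A := inter_subset_inter_left _ subset_closure
  refine le_trans (mul_le_mul_right (measure_mono hsub) _) ?_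
  set D : Set X := closure s ∩ A with hDdef
  have hDm : MeasurableSet D := isClosed_closure.measurableSet.inter hA
  have hdiam : ∀ x ∈ D, ∀ y ∈ D, edist x y ≤ EMetric.diam s := by
    intro x hx y hy
    calc edist x y ≤ EMetric.diam (closure s) := EMetric.edist_le_diam_of_mem hx.1 hy.1
    _ = EMetric.diam s := EMetric.diam_closure _
  rcases eq_or_ne (μ D) 0 with h0 | h0
  · simp [h0]
  have hD1 : μ D ≤ 1 := prob_le_one
  have hex : ∃ k : ℕ, 1 < (k + 1 : ℝ≥0∞) * μ D := by
    obtain ⟨n, hn⟩ := ENNReal.exists_inv_nat_lt h0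
    have hn0 : (n : ℝ≥0∞) ≠ 0 := by
      intro h
      rw [h, ENNReal.inv_zero] at hn
      exact absurd (hn.trans_le hD1) (by simp)
    refine ⟨n, ?_⟩
    calc (1 : ℝ≥0∞) = n * (n : ℝ≥0∞)⁻¹ := (ENNReal.mul_inv_cancel hn0 (by simp)).symm
    _ < n * μ D := ENNReal.mul_lt_mul_right hn0 (by simp) hn
    _ ≤ (n + 1 : ℝ≥0∞) * μ D := by gcongr; simp
  set k : ℕ := Nat.find hex with hkdef
  have hk : 1 < (k + 1 : ℝ≥0∞) * μ D := Nat.find_spec hex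
  have hk1 : 1 ≤ k := by
    rcases Nat.eq_zero_or_pos k with h | h
    · exfalso
      rw [h] at hk
      simp only [Nat.cast_zero, zero_add, one_mul] at hk
      exact absurd (hk.trans_le hD1) (by simp)
    · exact h
  have hkmin : (k : ℝ≥0∞) * μ D ≤ 1 := by
    have := Nat.find_min hex (m := k - 1) (by omega)
    push_neg at this
    have hcast' : ((k - 1 : ℕ) + 1 : ℕ) = k := by omega
    have hcast : ((k - 1 : ℕ) : ℝ≥0∞) + 1 = (k : ℝ≥0∞) := by
      exact_mod_cast congrArg (Nat.cast : ℕ → ℝ≥0∞) hcast'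
    rwa [hcast] at this
  obtain ⟨i, hi, j, hj, hij, x, hxi, hxj⟩ :
      ∃ i ∈ Finset.range (k + 1), ∃ j ∈ Finset.range (k + 1), ∃ _h : i ≠ j,
        ((T^[i] ⁻¹' D) ∩ (T^[j] ⁻¹' D)).Nonempty := by
    apply exists_nonempty_inter_of_measure_univ_lt_sum_measure μ
      (fun i _ => ((hDm.preimage (hT.iterate i).measurable).nullMeasurableSet))
    have hsum : ∀ i ∈ Finset.range (k + 1), μ (T^[i] ⁻¹' D) = μ D := fun i _ =>
      (hT.iterate i).measure_preimage hDm.nullMeasurableSet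
    rw [Finset.sum_congr rfl hsum, Finset.sum_const, Finset.card_range, measure_univ,
      nsmul_eq_mul]
    push_cast
    exact hk
  wlog hlt : i < j generalizing i j
  · exact this j hj i hi (Ne.symm hij) hxj hxi (by omega)
  set n : ℕ := j - i with hndef
  have hn1 : 1 ≤ n := by omega
  have hnk : n ≤ k := by
    simp only [Finset.mem_range] at hj
    omega
  set y : X := T^[i] x with hydef
  have hyD : y ∈ D := hxi
  have hTnyD : T^[n] y ∈ D := by
    have : T^[n] (T^[i] x) = T^[j] x := by
      rw [← Function.iterate_add_apply]
      congr 1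
      omega
    rw [hydef, this]
    exact hxj
  have hed : edist (T^[n] y) y ≤ EMetric.diam s := hdiam _ hTnyD _ hyD
  have hkey : ENNReal.ofReal c < ENNReal.ofReal ((n : ℝ) ^ (1 / α)) * EMetric.diam s := by
    refine lt_of_lt_of_le (hAN y hyD.2 n hn1 hTnyD.2 (hed.trans hs)) ?_
    exact mul_le_mul_right hed _
  have h2 : ENNReal.ofReal ((n : ℝ) ^ (1 / α)) ^ α = (n : ℝ≥0∞) := by
    rw [ENNReal.ofReal_rpow_of_pos
        (Real.rpow_pos_of_pos (by exact_mod_cast hn1 : (0:ℝ) < (n:ℝ)) _),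
      ← Real.rpow_mul (Nat.cast_nonneg n), one_div_mul_cancel hα.ne', Real.rpow_one,
      ENNReal.ofReal_natCast]
  have hpow : ENNReal.ofReal (c ^ α) ≤ (n : ℝ≥0∞) * EMetric.diam s ^ α := by
    have h1 := ENNReal.rpow_le_rpow hkey.le hα.le
    rw [ENNReal.mul_rpow_of_nonneg _ _ hα.le, h2, ENNReal.ofReal_rpow_of_pos hc] at h1
    exact h1
  calc ENNReal.ofReal (c ^ α) * μ D ≤ ((n : ℝ≥0∞) * EMetric.diam s ^ α) * μ D :=
        mul_le_mul_left hpow _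
  _ ≤ ((k : ℝ≥0∞) * EMetric.diam s ^ α) * μ D := by gcongr
  _ = EMetric.diam s ^ α * ((k : ℝ≥0∞) * μ D) := by ring
  _ ≤ EMetric.diam s ^ α * 1 := mul_le_mul_right hkmin _
  _ = EMetric.diam s ^ α := mul_one _

theorem nullaux {X : Type*} [MetricSpace X] [TopologicalSpace.SeparableSpace X]
    [MeasurableSpace X] [BorelSpace X]
    (T : X → X) (hTm : Measurable T) (μ : Measure X) [IsProbabilityMeasure μ]
    (hT : MeasurePreserving T μ μ)
    (α : ℝ) (hα : 0 < α) (g : X → ENNReal)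
    (hden : μH[α] = μ.withDensity g)
    (c q : ℝ) (hc : 0 < c) (hq0 : 0 ≤ q) (hq : q < c ^ α)
    (B : Set X) (hB : MeasurableSet B)
    (hess : essSup g (μ.restrict B) ≤ ENNReal.ofReal q) (N m : ℕ) :
    μ (B ∩ {x | (∀ n, N ≤ n →
        ENNReal.ofReal c < ENNReal.ofReal ((n : ℝ) ^ (1 / α)) * edist (T^[n] x) x) ∧
      (∀ n, 1 ≤ n → n < N → ((m : ℝ≥0∞) + 1)⁻¹ < edist (T^[n] x) x)}) = 0 := by
  classical
  have : SecondCountableTopology X := UniformSpace.secondCountable_of_separable X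
  have hfm : ∀ n : ℕ, Measurable fun x => edist (T^[n] x) x := fun n =>
    (hTm.iterate n).edist measurable_id
  set A : Set X := B ∩ {x | (∀ n, N ≤ n →
        ENNReal.ofReal c < ENNReal.ofReal ((n : ℝ) ^ (1 / α)) * edist (T^[n] x) x) ∧
      (∀ n, 1 ≤ n → n < N → ((m : ℝ≥0∞) + 1)⁻¹ < edist (T^[n] x) x)} with hAdef
  have hm1 : MeasurableSet {x : X | ∀ n : ℕ, N ≤ n →
      ENNReal.ofReal c < ENNReal.ofReal ((n : ℝ) ^ (1 / α)) * edist (T^[n] x) x} := by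
    rw [setOf_forall]
    refine MeasurableSet.iInter fun n => ?_
    by_cases h : N ≤ n
    · simp only [h, true_implies]
      exact ((hfm n).const_mul _) measurableSet_Ioi
    · simp [h]
  have hm2 : MeasurableSet {x : X | ∀ n : ℕ, 1 ≤ n → n < N →
      ((m : ℝ≥0∞) + 1)⁻¹ < edist (T^[n] x) x} := by
    rw [setOf_forall]
    refine MeasurableSet.iInter fun n => ?_
    by_cases h : 1 ≤ n ∧ n < N
    · simp only [h.1, h.2, true_implies]
      exact (hfm n) measurableSet_Ioi
    · rcases not_and_or.mp h with h' | h' <;> simp [h']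
  have hA : MeasurableSet A := hB.inter (hm1.inter hm2)
  have hsubB : A ⊆ B := inter_subset_left
  have hεpos : (0 : ℝ≥0∞) < ((m : ℝ≥0∞) + 1)⁻¹ := by
    simp [ENNReal.inv_pos]
  have hkey := keyest T μ hT α c hα hc A hA _ hεpos ?hAN
  case hAN =>
    rintro x ⟨-, hx1, hx2⟩ n hn1 hTnx hednle
    rcases lt_or_ge n N with h | h
    · exact absurd hednle (not_le.mpr (hx2 n hn1 h))
    · exact hx1 n h
  have h1 : ENNReal.ofReal (c ^ α) * μ A ≤ μH[α] A := by
    have := hkey A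
    rwa [Measure.smul_apply, smul_eq_mul, Measure.restrict_apply_self] at this
  have h2 : μH[α] A ≤ ENNReal.ofReal q * μ A := by
    rw [hden, withDensity_apply g hA]
    have hae : ∀ᵐ x ∂μ.restrict A, g x ≤ ENNReal.ofReal q :=
      ae_restrict_of_ae_restrict_of_subset hsubB
        ((ENNReal.ae_le_essSup g).mono fun x hx => hx.trans hess)
    calc ∫⁻ x in A, g x ∂μ ≤ ∫⁻ _ in A, ENNReal.ofReal q ∂μ := lintegral_mono_ae hae
    _ = ENNReal.ofReal q * μ A := setLIntegral_const _ _
  rcases eq_or_ne (μ A) 0 with h0 | h0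
  · exact h0
  exfalso
  have hfin : μ A ≠ ∞ := (measure_lt_top μ A).ne
  have := (ENNReal.mul_le_mul_iff_left h0 hfin).mp (h1.trans h2)
  rw [ENNReal.ofReal_le_ofReal_iff (by positivity)] at this
  exact absurd this (not_le.mpr hq)

theorem stmt_3 {X : Type*} [MetricSpace X] [TopologicalSpace.SeparableSpace X]
    [MeasurableSpace X] [BorelSpace X]
    (T : X → X) (hTm : Measurable T) (μ : Measure X) [IsProbabilityMeasure μ]
    (hT : MeasurePreserving T μ μ) (hErg : Ergodic T μ)
    (α : ℝ) (hα : 0 < α) (g : X → ENNReal) (hg : Measurable g)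
    (hden : μH[α] = μ.withDensity g) (habs : μ ≪ μH[α]) :
    ∀ᵐ x ∂μ, liminf
        (fun n : ℕ => ENNReal.ofReal ((n : ℝ) ^ (1 / α)) * edist (T^[n] x) x) atTop
      ≤ (⨅ (r : ℝ) (_ : 0 < r), essSup g (μ.restrict (Metric.ball x r))) ^ (1 / α) := by
  classical
  have hsc : SecondCountableTopology X := UniformSpace.secondCountable_of_separable X
  obtain ⟨Dd, hDc, hDdense⟩ := TopologicalSpace.exists_countable_dense X
  have hαinv : 0 < 1 / α := by positivity
  set F : ℚ → X → ℚ → ℚ → ℕ → ℕ → Set X := fun c z t q N m =>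
    {x | (0 < (c : ℝ) ∧ 0 ≤ (q : ℝ) ∧ (q : ℝ) < (c : ℝ) ^ α ∧
           essSup g (μ.restrict (Metric.ball z (t : ℝ))) ≤ ENNReal.ofReal (q : ℝ)) ∧
         x ∈ Metric.ball z (t : ℝ) ∧
         (∀ n, N ≤ n → ENNReal.ofReal (c : ℝ) <
            ENNReal.ofReal ((n : ℝ) ^ (1 / α)) * edist (T^[n] x) x) ∧
         (∀ n, 1 ≤ n → n < N → ((m : ℝ≥0∞) + 1)⁻¹ < edist (T^[n] x) x)} with hFdef
  have hFnull : ∀ c z t q N m, μ (F c z t q N m) = 0 := by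
    intro c z t q N m
    by_cases hside : 0 < (c : ℝ) ∧ 0 ≤ (q : ℝ) ∧ (q : ℝ) < (c : ℝ) ^ α ∧
        essSup g (μ.restrict (Metric.ball z (t : ℝ))) ≤ ENNReal.ofReal (q : ℝ)
    · have hFeq : F c z t q N m = Metric.ball z (t : ℝ) ∩
          {x | (∀ n, N ≤ n → ENNReal.ofReal (c : ℝ) <
              ENNReal.ofReal ((n : ℝ) ^ (1 / α)) * edist (T^[n] x) x) ∧
            (∀ n, 1 ≤ n → n < N → ((m : ℝ≥0∞) + 1)⁻¹ < edist (T^[n] x) x)} := by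
        ext y
        simp only [hFdef, mem_setOf_eq, mem_inter_iff, hside, true_and]
      rw [hFeq]
      exact nullaux T hTm μ hT α hα g hden (c : ℝ) (q : ℝ) hside.1 hside.2.1 hside.2.2.1
        _ Metric.isOpen_ball.measurableSet hside.2.2.2 N m
    · have hFeq : F c z t q N m = ∅ := by
        ext y
        simp only [hFdef, mem_setOf_eq, mem_empty_iff_false, iff_false]
        tauto
      simp [hFeq]
  rw [ae_iff]
  have hsub : {x | ¬ liminf
        (fun n : ℕ => ENNReal.ofReal ((n : ℝ) ^ (1 / α)) * edist (T^[n] x) x) atTop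
      ≤ (⨅ (r : ℝ) (_ : 0 < r), essSup g (μ.restrict (Metric.ball x r))) ^ (1 / α)} ⊆
      ⋃ (c : ℚ), ⋃ z ∈ Dd, ⋃ (t : ℚ), ⋃ (q : ℚ), ⋃ (N : ℕ), ⋃ (m : ℕ), F c z t q N m := by
    intro x hx
    simp only [mem_setOf_eq, not_le] at hx
    set S : ℝ≥0∞ := ⨅ (r : ℝ) (_ : 0 < r), essSup g (μ.restrict (Metric.ball x r)) with hSdef
    have hSne : S ≠ ⊤ := by
      intro h
      rw [h, ENNReal.top_rpow_of_pos hαinv] at hx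
      exact not_top_lt hx
    obtain ⟨c, hc0', h1, h2⟩ := ENNReal.lt_iff_exists_rat_btwn.mp hx
    have hcoe : ((Real.toNNReal (c : ℝ) : ℝ≥0) : ℝ≥0∞) = ENNReal.ofReal (c : ℝ) := rfl
    rw [hcoe] at h1 h2
    have hc0 : 0 < (c : ℝ) := by
      by_contra h
      push_neg at h
      rw [ENNReal.ofReal_eq_zero.mpr h] at h1
      simp at h1
    have hS2 : S < ENNReal.ofReal ((c : ℝ) ^ α) := by
      have h3 := ENNReal.rpow_lt_rpow h1 hα
      rwa [← ENNReal.rpow_mul, one_div_mul_cancel hα.ne', ENNReal.rpow_one,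
        ENNReal.ofReal_rpow_of_pos hc0] at h3
    obtain ⟨r, hrS⟩ := iInf_lt_iff.mp hS2
    obtain ⟨hr0, hress⟩ := iInf_lt_iff.mp hrS
    obtain ⟨q, hq0', hq1, hq2⟩ := ENNReal.lt_iff_exists_rat_btwn.mp hress
    have hqcoe : ((Real.toNNReal (q : ℝ) : ℝ≥0) : ℝ≥0∞) = ENNReal.ofReal (q : ℝ) := rfl
    rw [hqcoe] at hq1 hq2
    have hq0 : 0 ≤ (q : ℝ) := by exact_mod_cast hq0'
    have hqlt : (q : ℝ) < (c : ℝ) ^ α :=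
      (ENNReal.ofReal_lt_ofReal_iff (by positivity)).mp hq2
    obtain ⟨z, hzD, hzx⟩ := hDdense.exists_dist_lt x (by linarith : (0:ℝ) < r / 4)
    obtain ⟨t, ht1, ht2⟩ := exists_rat_btwn (by linarith : r / 4 < r / 2)
    have ht0 : 0 < (t : ℝ) := by linarith
    have hxz : x ∈ Metric.ball z (t : ℝ) := by
      rw [Metric.mem_ball]
      linarith
    have hball : Metric.ball z (t : ℝ) ⊆ Metric.ball x r := by
      intro y hy
      rw [Metric.mem_ball] at hy ⊢
      have h4 := dist_triangle y z x
      rw [dist_comm z x] at h4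
      linarith
    have hessz : essSup g (μ.restrict (Metric.ball z (t : ℝ))) ≤ ENNReal.ofReal (q : ℝ) := by
      refine le_trans (essSup_mono_measure ?_) hq1.le
      exact Measure.absolutelyContinuous_of_le (Measure.restrict_mono hball le_rfl)
    obtain ⟨N, hN⟩ := eventually_atTop.mp (eventually_lt_of_lt_liminf h2)
    have hpos : ∀ n, 1 ≤ n → n < N → 0 < edist (T^[n] x) x := by
      intro n hn1 hnN
      rcases eq_or_ne (edist (T^[n] x) x) 0 with h | h
      · exfalso
        have hfix : T^[n] x = x := by rwa [edist_eq_zero] at h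
        have hiter : T^[n * N] x = x := by
          rw [Function.iterate_mul]
          exact Function.iterate_fixed hfix N
        have hnN' : N ≤ n * N := Nat.le_mul_of_pos_left N hn1
        have h5 := hN (n * N) hnN'
        rw [hiter, edist_self, mul_zero] at h5
        simp at h5
      · exact pos_iff_ne_zero.mpr h
    have hm : ∃ m : ℕ, ∀ n, 1 ≤ n → n < N →
        ((m : ℝ≥0∞) + 1)⁻¹ < edist (T^[n] x) x := by
      rcases Nat.lt_or_ge 1 N with hN1 | hN1
      · have hFne : (Finset.Ico 1 N).Nonempty := ⟨1, by simp [Finset.mem_Ico]; omega⟩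
        have he0 : (Finset.Ico 1 N).inf' hFne (fun n => edist (T^[n] x) x) ≠ 0 := by
          rw [← pos_iff_ne_zero, Finset.lt_inf'_iff]
          intro i hi
          exact hpos i (Finset.mem_Ico.mp hi).1 (Finset.mem_Ico.mp hi).2
        obtain ⟨m, hm'⟩ := ENNReal.exists_inv_nat_lt he0
        refine ⟨m, fun n h1' h2' => ?_⟩
        calc ((m : ℝ≥0∞) + 1)⁻¹ ≤ (m : ℝ≥0∞)⁻¹ := ENNReal.inv_le_inv.mpr le_self_add
        _ < _ := hm'
        _ ≤ edist (T^[n] x) x := Finset.inf'_le _ (by simp [Finset.mem_Ico]; omega)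
      · exact ⟨0, fun n h1' h2' => absurd h2' (by omega)⟩
    obtain ⟨m, hmp⟩ := hm
    refine mem_iUnion.mpr ⟨c, ?_⟩
    refine mem_biUnion hzD ?_
    refine mem_iUnion.mpr ⟨t, mem_iUnion.mpr ⟨q, mem_iUnion.mpr ⟨N, mem_iUnion.mpr ⟨m, ?_⟩⟩⟩⟩
    exact ⟨⟨hc0, hq0, hqlt, hessz⟩, hxz, fun n hn => hN n hn, hmp⟩
  refine measure_mono_null hsub ?_
  refine measure_iUnion_null fun c => ?_
  refine (measure_biUnion_null_iff hDc).mpr fun z _ => ?_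
  refine measure_iUnion_null fun t => ?_
  refine measure_iUnion_null fun q => ?_
  refine measure_iUnion_null fun N => ?_
  exact measure_iUnion_null fun m => hFnull c z t q N m
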